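/- Let X be an absolute 1-Lipschitz uniform neighborhood retract. Then X is complete and geodesic: X is a complete metric space, and for all x, y ∈ X there exists a geodesic from x to y. -/

import Mathlib

open Set Metric

universe u v

/-- `X` is an absolute 1-Lipschitz neighborhood retract: for every metric space `Y` and
every isometric embedding `i : X → Y` there is an open neighborhood `U` of `i(X)` in `Y`
and a 1-Lipschitz retraction `ρ : U → i(X)`. -/
def IsAbs1LipNbhdRetract (X : Type u) [MetricSpace X] : Prop :=
  ∀ (Y : Type u) [MetricSpace Y], ∀ i : X → Y, Isometry i →
    ∃ U : Set Y, IsOpen U ∧ Set.range i ⊆ U ∧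
      ∃ ρ : U → Y, LipschitzWith 1 ρ ∧ (∀ u : U, ρ u ∈ Set.range i) ∧
        ∀ (x : X) (h : i x ∈ U), ρ ⟨i x, h⟩ = i x

/-- `X` is an absolute 1-Lipschitz uniform neighborhood retract: for every metric space `Y`
and every isometric embedding `i : X → Y` there are `ε > 0` and a 1-Lipschitz retraction
`ρ : U → i(X)` where `U = {y ∈ Y : dist(y, i(X)) < ε}`. -/
def IsAbs1LipUnifNbhdRetract (X : Type u) [MetricSpace X] : Prop :=
  ∀ (Y : Type u) [MetricSpace Y], ∀ i : X → Y, Isometry i →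
    ∃ ε > (0:ℝ), ∃ ρ : {y : Y // infDist y (Set.range i) < ε} → Y,
      LipschitzWith 1 ρ ∧ (∀ u, ρ u ∈ Set.range i) ∧
        ∀ (x : X) (h : infDist (i x) (Set.range i) < ε), ρ ⟨i x, h⟩ = i x

/-- `c : [0,1] → X` is a geodesic: `d(c s, c t) = |s - t| ⬝ d(c 0, c 1)` for `s, t ∈ [0,1]`. -/
def IsGeodesicSegment {X : Type*} [MetricSpace X] (c : ℝ → X) : Prop :=
  ∀ s ∈ Icc (0:ℝ) 1, ∀ t ∈ Icc (0:ℝ) 1,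
    dist (c s) (c t) = |s - t| * dist (c 0) (c 1)

section Aux

open BoundedContinuousFunction

variable {X : Type u} [MetricSpace X]

/-- Kuratowski-type isometric embedding of an arbitrary metric space into the space of
bounded continuous real functions on itself. -/
noncomputable def kurEmb (x₀ : X) (x : X) : X →ᵇ ℝ :=
  mkOfBound ⟨fun z => dist x z - dist x₀ z, by fun_prop⟩ (2 * dist x x₀) (by
    intro a b
    rw [Real.dist_eq]
    have h1 := abs_dist_sub_le x x₀ a
    have h2 := abs_dist_sub_le x x₀ b
    rw [abs_le] at h1 h2 ⊢
    constructor <;> simp only [ContinuousMap.coe_mk] <;>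
      nlinarith [dist_nonneg (x := x) (y := x₀)])

theorem kurEmb_apply (x₀ x z : X) : kurEmb x₀ x z = dist x z - dist x₀ z := rfl

theorem kurEmb_isometry (x₀ : X) : Isometry (kurEmb x₀) := by
  refine Isometry.of_dist_eq fun x y => le_antisymm ?_ ?_
  · rw [BoundedContinuousFunction.dist_le dist_nonneg]
    intro z
    rw [kurEmb_apply, kurEmb_apply, Real.dist_eq]
    have := abs_dist_sub_le x y z
    rw [abs_le] at this ⊢
    constructor <;> linarith [this.1, this.2]
  · have h := BoundedContinuousFunction.dist_coe_le_dist
      (f := kurEmb x₀ x) (g := kurEmb x₀ y) y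
    rw [kurEmb_apply, kurEmb_apply, Real.dist_eq, dist_self] at h
    have : |dist x y - dist x₀ y - (0 - dist x₀ y)| = dist x y := by
      rw [show dist x y - dist x₀ y - (0 - dist x₀ y) = dist x y by ring,
        abs_of_nonneg dist_nonneg]
    linarith [this ▸ h]

theorem chain_dist_le (g : ℕ → X) (δ : ℝ) (L : ℕ)
    (hc : ∀ k < L, dist (g k) (g (k + 1)) = δ) :
    ∀ j k, j ≤ k → k ≤ L → dist (g j) (g k) ≤ (k - j : ℝ) * δ := by
  intro j k hjk hkL
  obtain ⟨m, rfl⟩ := Nat.exists_eq_add_of_le hjk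
  induction m with
  | zero => simp
  | succ m ih =>
    have h1 : dist (g (j + m)) (g (j + m + 1)) = δ := hc _ (by omega)
    have h2 := ih (by omega) (by omega)
    calc dist (g j) (g (j + (m+1)))
        ≤ dist (g j) (g (j+m)) + dist (g (j+m)) (g (j+m+1)) := by
          rw [show j + (m+1) = j + m + 1 by omega]; exact dist_triangle _ _ _
      _ ≤ (↑(j+m) - ↑j) * δ + δ := by linarith
      _ = (↑(j+(m+1)) - ↑j) * δ := by push_cast; ring

theorem chain_dist (g : ℕ → X) (δ : ℝ) (L : ℕ)
    (hc : ∀ k < L, dist (g k) (g (k + 1)) = δ)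
    (he : dist (g 0) (g L) = L * δ) :
    ∀ j k, j ≤ k → k ≤ L → dist (g j) (g k) = (k - j : ℝ) * δ := by
  intro j k hjk hkL
  refine le_antisymm (chain_dist_le g δ L hc j k hjk hkL) ?_
  have h1 := chain_dist_le g δ L hc 0 j (by omega) (by omega)
  have h2 := chain_dist_le g δ L hc k L hkL le_rfl
  have h3 := dist_triangle4 (g 0) (g j) (g k) (g L)
  rw [he] at h3
  push_cast at h1 h2 ⊢
  linarith

theorem exists_family {α : Sort*} (Q : ℕ → α → Prop) (R : ℕ → α → α → Prop)
    (h0 : ∃ a, Q 0 a) (hstep : ∀ m a, Q m a → ∃ b, Q (m + 1) b ∧ R m a b) :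
    ∃ f : ℕ → α, (∀ m, Q m (f m)) ∧ ∀ m, R m (f m) (f (m + 1)) := by
  choose b hb1 hb2 using hstep
  let g : (m : ℕ) → {a // Q m a} := fun m =>
    Nat.rec ⟨h0.choose, h0.choose_spec⟩ (fun m p => ⟨b m p.1 p.2, hb1 m p.1 p.2⟩) m
  exact ⟨fun m => (g m).1, fun m => (g m).2, fun m => hb2 m (g m).1 (g m).2⟩

variable {ε : ℝ}

theorem exists_chain
    (hbet : ∀ a b : X, ∀ t : ℝ, 0 ≤ t → t ≤ dist a b → t < ε →
      ∃ q, dist a q = t ∧ dist q b = dist a b - t)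
    (x y : X) (n : ℕ) (hn : 0 < n) (hd : dist x y / n < ε) :
    ∃ g : ℕ → X, g 0 = x ∧ g n = y ∧
      ∀ k < n, dist (g k) (g (k + 1)) = dist x y / n := by
  set d := dist x y with hdxy
  have hd0 : 0 ≤ d := dist_nonneg
  set δ := d / n with hδ
  have hδ0 : 0 ≤ δ := by positivity
  have key : ∀ m, m ≤ n → ∃ g : ℕ → X, g 0 = x ∧
      (dist x (g m) = m * δ ∧ dist (g m) y = d - m * δ) ∧
      ∀ k < m, dist (g k) (g (k + 1)) = δ := by
    intro m
    induction m with
    | zero => exact fun _ => ⟨fun _ => x, rfl, by simp [hdxy], by omega⟩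
    | succ m ih =>
      intro hm
      obtain ⟨g, hg0, ⟨hgx, hgy⟩, hgc⟩ := ih (by omega)
      have hnδ : (n : ℝ) * δ = d := by rw [hδ]; field_simp [(Nat.cast_pos.mpr hn).ne']
      have hle : δ ≤ dist (g m) y := by
        rw [hgy]
        have : ((m : ℝ) + 1) * δ ≤ n * δ := by
          apply mul_le_mul_of_nonneg_right _ hδ0
          exact_mod_cast hm
        nlinarith
      obtain ⟨q, hq1, hq2⟩ := hbet (g m) y δ hδ0 hle hd
      refine ⟨Function.update g (m + 1) q, ?_, ⟨?_, ?_⟩, ?_⟩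
      · rw [Function.update_of_ne (by omega), hg0]
      · rw [Function.update_self]
        have h1 : dist x q ≤ m * δ + δ := by
          calc dist x q ≤ dist x (g m) + dist (g m) q := dist_triangle _ _ _
            _ = m * δ + δ := by rw [hgx, hq1]
        have h2 : d ≤ dist x q + dist q y := by
          have := dist_triangle x q y
          rw [← hdxy] at this; linarith
        rw [hq2, hgy] at h2
        push_cast
        linarith
      · rw [Function.update_self, hq2, hgy]; push_cast; ring
      · intro k hk
        rcases Nat.lt_or_ge k m with hkm | hkm
        · rw [Function.update_of_ne (by omega), Function.update_of_ne (by omega)]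
          exact hgc k hkm
        · have : k = m := by omega
          subst this
          rw [Function.update_of_ne (by omega), Function.update_self, hq1]
  obtain ⟨g, hg0, ⟨hgx, hgy⟩, hgc⟩ := key n le_rfl
  have hny : g n = y := by
    have hz : dist (g n) y = 0 := by
      rw [hgy]
      linarith [((by rw [hδ]; field_simp [(Nat.cast_pos.mpr hn).ne'] : (n : ℝ) * δ = d))]
    exact dist_eq_zero.mp hz
  exact ⟨g, hg0, hny, hgc⟩

theorem exists_refine
    (hbet : ∀ a b : X, ∀ t : ℝ, 0 ≤ t → t ≤ dist a b → t < ε →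
      ∃ q, dist a q = t ∧ dist q b = dist a b - t)
    (g : ℕ → X) (n : ℕ) (δ : ℝ) (hδ0 : 0 ≤ δ) (hδε : δ / 2 < ε)
    (hc : ∀ k < n, dist (g k) (g (k + 1)) = δ) :
    ∃ g' : ℕ → X, (∀ k, g' (2 * k) = g k) ∧
      ∀ k < 2 * n, dist (g' k) (g' (k + 1)) = δ / 2 := by
  have hmid : ∀ i, ∃ q : X, i < n →
      dist (g i) q = δ / 2 ∧ dist q (g (i + 1)) = δ / 2 := by
    intro i
    rcases Nat.lt_or_ge i n with hi | hi
    · obtain ⟨q, hq1, hq2⟩ := hbet (g i) (g (i + 1)) (δ / 2) (by linarith)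
        (by rw [hc i hi]; linarith) hδε
      exact ⟨q, fun _ => ⟨hq1, by rw [hq2, hc i hi]; ring⟩⟩
    · exact ⟨g 0, fun h => absurd h (by omega)⟩
  choose q hq using hmid
  refine ⟨fun k => if Even k then g (k / 2) else q (k / 2), fun k => by simp, ?_⟩
  intro k hk
  rcases Nat.even_or_odd k with he | ho
  · obtain ⟨i, rfl⟩ := he
    have hi : i < n := by omega
    have e1 : Even (i + i) := ⟨i, rfl⟩
    have e2 : ¬ Even (i + i + 1) := by simp [Nat.even_add_one, e1]
    simp only [e1, e2, if_true, if_false]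
    rw [show (i + i) / 2 = i by omega, show (i + i + 1) / 2 = i by omega]
    exact (hq i hi).1
  · obtain ⟨i, rfl⟩ := ho
    have hi : i < n := by omega
    have e2 : ¬ Even (2 * i + 1) := by simp [Nat.even_add_one]
    have e1 : Even (2 * i + 1 + 1) := ⟨i + 1, by ring⟩
    simp only [e1, e2, if_true, if_false]
    rw [show (2 * i + 1) / 2 = i by omega, show (2 * i + 1 + 1) / 2 = i + 1 by omega]
    exact (hq i hi).2

theorem retract_bet {E : Type v} [NormedAddCommGroup E] [NormedSpace ℝ E]
    (K : X → E) (hK : Isometry K) (hε : 0 < ε)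
    (ρ : {y : E // infDist y (Set.range K) < ε} → E)
    (hρlip : LipschitzWith 1 ρ) (hρmem : ∀ u, ρ u ∈ Set.range K)
    (hρret : ∀ x (hx : infDist (K x) (Set.range K) < ε), ρ ⟨K x, hx⟩ = K x) :
    ∀ a b : X, ∀ t : ℝ, 0 ≤ t → t ≤ dist a b → t < ε →
      ∃ q, dist a q = t ∧ dist q b = dist a b - t := by
  have hKmem : ∀ a : X, infDist (K a) (Set.range K) < ε := fun a => by
    rw [infDist_zero_of_mem (mem_range_self a)]; exact hε
  have hlip' : ∀ u v, dist (ρ u) (ρ v) ≤ dist u.1 v.1 := fun u v => by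
    simpa [Subtype.dist_eq] using hρlip.dist_le_mul u v
  intro a b t ht0 htd htε
  by_cases hd : dist a b = 0
  · have ht : t = 0 := le_antisymm (hd ▸ htd) ht0
    subst ht
    exact ⟨a, by simp, by simp⟩
  have hd0 : 0 < dist a b := lt_of_le_of_ne dist_nonneg (Ne.symm hd)
  set p := AffineMap.lineMap (K a) (K b) (t / dist a b) with hp
  have hKab : dist (K a) (K b) = dist a b := hK.dist_eq a b
  have htd1 : t / dist a b ≤ 1 := by rw [div_le_one hd0]; exact htd
  have hpa : dist p (K a) = t := by
    rw [hp, dist_lineMap_left, hKab, Real.norm_eq_abs,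
      abs_of_nonneg (by positivity)]
    field_simp
  have hpb : dist p (K b) = dist a b - t := by
    rw [hp, dist_lineMap_right, hKab, Real.norm_eq_abs,
      abs_of_nonneg (by linarith)]
    field_simp
  have hpmem : infDist p (Set.range K) < ε :=
    lt_of_le_of_lt ((infDist_le_dist_of_mem (mem_range_self a)).trans hpa.le) htε
  obtain ⟨q, hq⟩ := hρmem ⟨p, hpmem⟩
  have h1 : dist q a ≤ t := by
    calc dist q a = dist (K q) (K a) := (hK.dist_eq q a).symm
      _ = dist (ρ ⟨p, hpmem⟩) (ρ ⟨K a, hKmem a⟩) := by rw [hq, hρret a (hKmem a)]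
      _ ≤ dist p (K a) := hlip' _ _
      _ = t := hpa
  have h2 : dist q b ≤ dist a b - t := by
    calc dist q b = dist (K q) (K b) := (hK.dist_eq q b).symm
      _ = dist (ρ ⟨p, hpmem⟩) (ρ ⟨K b, hKmem b⟩) := by rw [hq, hρret b (hKmem b)]
      _ ≤ dist p (K b) := hlip' _ _
      _ = dist a b - t := hpb
  have htri := dist_triangle a q b
  have hcomm : dist a q = dist q a := dist_comm a q
  exact ⟨q, by linarith, by linarith⟩

theorem retract_complete {E : Type v} [NormedAddCommGroup E] [NormedSpace ℝ E]
    [CompleteSpace E]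
    (K : X → E) (hK : Isometry K) (hε : 0 < ε)
    (ρ : {y : E // infDist y (Set.range K) < ε} → E)
    (hρlip : LipschitzWith 1 ρ) (hρmem : ∀ u, ρ u ∈ Set.range K)
    (hρret : ∀ x (hx : infDist (K x) (Set.range K) < ε), ρ ⟨K x, hx⟩ = K x) :
    CompleteSpace X := by
  have hKmem : ∀ a : X, infDist (K a) (Set.range K) < ε := fun a => by
    rw [infDist_zero_of_mem (mem_range_self a)]; exact hε
  have hlip' : ∀ u v, dist (ρ u) (ρ v) ≤ dist u.1 v.1 := fun u v => by
    simpa [Subtype.dist_eq] using hρlip.dist_le_mul u v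
  apply Metric.complete_of_cauchySeq_tendsto
  intro u hu
  have hcu : CauchySeq (K ∘ u) := hK.uniformContinuous.comp_cauchySeq hu
  obtain ⟨e, he⟩ := cauchySeq_tendsto_of_complete hcu
  have hdist0 : Filter.Tendsto (fun m => dist (K (u m)) e) Filter.atTop (nhds 0) :=
    tendsto_iff_dist_tendsto_zero.1 he
  have hinf : infDist e (Set.range K) < ε := by
    obtain ⟨m, hm⟩ := (hdist0.eventually (gt_mem_nhds hε)).exists
    calc infDist e (Set.range K) ≤ dist e (K (u m)) :=
          infDist_le_dist_of_mem (mem_range_self (u m))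
      _ = dist (K (u m)) e := dist_comm _ _
      _ < ε := hm
  obtain ⟨l, hl⟩ := hρmem ⟨e, hinf⟩
  refine ⟨l, tendsto_iff_dist_tendsto_zero.2 ?_⟩
  have hb : ∀ m, dist (u m) l ≤ dist (K (u m)) e := by
    intro m
    calc dist (u m) l = dist (K (u m)) (K l) := (hK.dist_eq _ _).symm
      _ = dist (ρ ⟨K (u m), hKmem (u m)⟩) (ρ ⟨e, hinf⟩) := by
          rw [hρret (u m) (hKmem (u m)), hl]
      _ ≤ dist (K (u m)) e := hlip' _ _
  exact squeeze_zero (fun m => dist_nonneg) hb hdist0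

end Aux

/-- An absolute 1-Lipschitz uniform neighborhood retract is a complete, geodesic metric
space. -/
theorem complete_geodesic_of_abs1LipUnifNbhdRetract
    {X : Type u} [MetricSpace X] (h : IsAbs1LipUnifNbhdRetract X) :
    CompleteSpace X ∧
    ∀ x y : X, ∃ c : ℝ → X, c 0 = x ∧ c 1 = y ∧ IsGeodesicSegment c := by
  rcases isEmpty_or_nonempty X with hX | hX
  · exact ⟨inferInstance, fun x => isEmptyElim x⟩
  obtain ⟨x₀⟩ := hX
  have hK : Isometry (kurEmb x₀) := kurEmb_isometry x₀
  obtain ⟨ε, hε, ρ, hρlip, hρmem, hρret⟩ := h (BoundedContinuousFunction X ℝ) (kurEmb x₀) hK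
  have hbet := retract_bet (kurEmb x₀) hK hε ρ hρlip hρmem hρret
  have hcomp : CompleteSpace X := retract_complete (kurEmb x₀) hK hε ρ hρlip hρmem hρret
  refine ⟨hcomp, fun x y => ?_⟩
  -- geodesics
  by_cases hxy : dist x y = 0
  · exact ⟨fun _ => x, rfl, dist_eq_zero.mp hxy, fun s _ t _ => by simp⟩
  have hd0 : 0 < dist x y := lt_of_le_of_ne dist_nonneg (Ne.symm hxy)
  obtain ⟨n, hngt⟩ := exists_nat_gt (dist x y / ε)
  have hn0' : (0:ℝ) < n := lt_trans (by positivity) hngt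
  have hn0 : 0 < n := by exact_mod_cast hn0'
  have hdn : dist x y / n < ε := by
    rw [div_lt_iff₀ hn0']
    have := (div_lt_iff₀ hε).1 hngt
    nlinarith
  have hNR : ∀ m : ℕ, (0:ℝ) < ((n * 2 ^ m : ℕ) : ℝ) := fun m => by positivity
  have hδ0 : ∀ m : ℕ, 0 ≤ dist x y / ((n * 2 ^ m : ℕ) : ℝ) := fun m => by positivity
  have hδle : ∀ m : ℕ, dist x y / ((n * 2 ^ m : ℕ) : ℝ) ≤ dist x y / n := by
    intro m
    have hle : (n:ℝ) ≤ ((n * 2 ^ m : ℕ) : ℝ) := by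
      have : n ≤ n * 2 ^ m := Nat.le_mul_of_pos_right n (by positivity)
      exact_mod_cast this
    rw [div_le_div_iff₀ (hNR m) hn0']
    nlinarith [hd0.le]
  -- the family of dyadic chains
  obtain ⟨G, hGQ, hGR⟩ := exists_family
    (Q := fun (m : ℕ) (g : ℕ → X) => g 0 = x ∧ g (n * 2 ^ m) = y ∧
      ∀ k < n * 2 ^ m, dist (g k) (g (k+1)) = dist x y / ((n * 2 ^ m : ℕ) : ℝ))
    (R := fun _ g g' => ∀ k, g' (2*k) = g k)
    (by
      obtain ⟨g, h1, h2, h3⟩ := exists_chain hbet x y n hn0 hdn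
      refine ⟨g, h1, by simpa using h2, ?_⟩
      intro k hk
      rw [pow_zero, mul_one] at hk
      have := h3 k hk
      rw [this]
      norm_num)
    (by
      intro m g ⟨hg0, hgN, hgc⟩
      have hδε : dist x y / ((n * 2 ^ m : ℕ) : ℝ) / 2 < ε :=
        lt_of_le_of_lt (by linarith [hδle m, hδ0 m]) hdn
      obtain ⟨g', hgc2, hc'⟩ := exists_refine hbet g (n * 2 ^ m)
        (dist x y / ((n * 2 ^ m : ℕ) : ℝ)) (hδ0 m) hδε hgc
      have hNm1 : n * 2 ^ (m+1) = 2 * (n * 2 ^ m) := by ring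
      have hδm1 : dist x y / ((n * 2 ^ (m+1) : ℕ) : ℝ)
          = dist x y / ((n * 2 ^ m : ℕ) : ℝ) / 2 := by
        push_cast
        rw [div_div]
        ring_nf
      refine ⟨g', ⟨?_, ?_, ?_⟩, hgc2⟩
      · have := hgc2 0
        rw [Nat.mul_zero] at this
        rw [this, hg0]
      · rw [hNm1, hgc2 (n * 2 ^ m)]
        exact hgN
      · intro k hk
        rw [hδm1]
        exact hc' k (by omega))
  -- pairwise distances at each level
  have hpair : ∀ m j k, j ≤ k → k ≤ n * 2 ^ m →
      dist (G m j) (G m k) = ((k:ℝ) - j) * (dist x y / ((n * 2 ^ m : ℕ) : ℝ)) := by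
    intro m
    apply chain_dist _ _ _ (hGQ m).2.2
    rw [(hGQ m).1, (hGQ m).2.1]
    field_simp
  have hpair' : ∀ m j k, j ≤ n * 2 ^ m → k ≤ n * 2 ^ m →
      dist (G m j) (G m k) = |(j:ℝ) - k| * (dist x y / ((n * 2 ^ m : ℕ) : ℝ)) := by
    intro m j k hj hk
    rcases le_total j k with hjk | hjk
    · rw [hpair m j k hjk hk, abs_sub_comm, abs_of_nonneg
        (sub_nonneg.2 (by exact_mod_cast hjk))]
    · rw [dist_comm, hpair m k j hjk hj, abs_of_nonneg
        (sub_nonneg.2 (by exact_mod_cast hjk))]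
  -- parameter snapping
  have htc0 : ∀ t : ℝ, 0 ≤ max 0 (min t 1) := fun t => le_max_left _ _
  have htc1 : ∀ t : ℝ, max 0 (min t 1) ≤ 1 := fun t => max_le (by norm_num) (min_le_right _ _)
  set kf : ℕ → ℝ → ℕ := fun m t => ⌊max 0 (min t 1) * ((n * 2 ^ m : ℕ) : ℝ)⌋₊ with hkf
  have hkfle : ∀ m t, kf m t ≤ n * 2 ^ m := by
    intro m t
    have h1 : max 0 (min t 1) * ((n * 2 ^ m : ℕ) : ℝ) ≤ ((n * 2 ^ m : ℕ) : ℝ) := by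
      nlinarith [htc1 t, htc0 t, hNR m]
    calc kf m t ≤ ⌊((n * 2 ^ m : ℕ) : ℝ)⌋₊ := Nat.floor_mono h1
      _ = n * 2 ^ m := Nat.floor_natCast _
  -- Cauchy sequences
  have hCau : ∀ t, CauchySeq (fun m => G m (kf m t)) := by
    intro t
    apply cauchySeq_of_le_geometric (1/2 : ℝ) (dist x y / n) (by norm_num)
    intro m
    have hcomp2 : G m (kf m t) = G (m+1) (2 * kf m t) := (hGR m _).symm
    have hNm1 : n * 2 ^ (m+1) = 2 * (n * 2 ^ m) := by ring
    have h2N : ((n * 2 ^ (m+1) : ℕ) : ℝ) = 2 * ((n * 2 ^ m : ℕ) : ℝ) := by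
      push_cast; ring
    have hb1 : 2 * kf m t ≤ n * 2 ^ (m+1) := by
      rw [hNm1]; exact Nat.mul_le_mul_left 2 (hkfle m t)
    have hu0 : 0 ≤ max 0 (min t 1) * ((n * 2 ^ m : ℕ) : ℝ) :=
      mul_nonneg (htc0 t) (hNR m).le
    have hfl : (kf m t : ℝ) ≤ max 0 (min t 1) * ((n * 2 ^ m : ℕ) : ℝ) := Nat.floor_le hu0
    have hfl2 : max 0 (min t 1) * ((n * 2 ^ m : ℕ) : ℝ) < kf m t + 1 :=
      Nat.lt_floor_add_one _
    push_cast at hfl hfl2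
    have hl : 2 * kf m t ≤ kf (m+1) t := by
      apply Nat.le_floor
      have heq : max 0 (min t 1) * ((n * 2 ^ (m+1) : ℕ) : ℝ)
          = 2 * (max 0 (min t 1) * ((n * 2 ^ m : ℕ) : ℝ)) := by rw [h2N]; ring
      rw [heq]
      push_cast
      linarith
    have hr : kf (m+1) t ≤ 2 * kf m t + 1 := by
      apply Nat.le_of_lt_succ
      apply (Nat.floor_lt (mul_nonneg (htc0 t) (hNR (m+1)).le)).2
      have heq : max 0 (min t 1) * ((n * 2 ^ (m+1) : ℕ) : ℝ)
          = 2 * (max 0 (min t 1) * ((n * 2 ^ m : ℕ) : ℝ)) := by rw [h2N]; ring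
      rw [heq]
      push_cast
      linarith
    have habs : |(2 * (kf m t) : ℝ) - kf (m+1) t| ≤ 1 := by
      rw [abs_le]
      have c1 : ((2 * kf m t : ℕ) : ℝ) ≤ ((kf (m+1) t : ℕ) : ℝ) := by exact_mod_cast hl
      have c2 : ((kf (m+1) t : ℕ) : ℝ) ≤ ((2 * kf m t + 1 : ℕ) : ℝ) := by exact_mod_cast hr
      push_cast at c1 c2
      constructor <;> linarith
    have hkey : dist (G m (kf m t)) (G (m+1) (kf (m+1) t))
        = |(2 * (kf m t) : ℝ) - kf (m+1) t| * (dist x y / ((n * 2 ^ (m+1) : ℕ) : ℝ)) := by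
      rw [hcomp2, hpair' (m+1) _ _ hb1 (hkfle _ _)]
      push_cast
      ring_nf
    rw [hkey]
    have hδval : dist x y / ((n * 2 ^ (m+1) : ℕ) : ℝ) ≤ dist x y / n * (1/2)^m := by
      have heq : dist x y / ((n * 2 ^ (m+1) : ℕ) : ℝ)
          = dist x y / n * (1/2)^(m+1) := by
        push_cast
        rw [div_pow, one_pow, div_mul_div_comm, mul_one]
      rw [heq]
      have h1 : ((1:ℝ)/2)^(m+1) ≤ (1/2)^m := by
        apply pow_le_pow_of_le_one (by norm_num) (by norm_num) (by omega)
      have h2 : (0:ℝ) ≤ dist x y / n := by positivity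
      nlinarith
    calc |(2 * (kf m t) : ℝ) - kf (m+1) t| * (dist x y / ((n * 2 ^ (m+1) : ℕ) : ℝ))
        ≤ 1 * (dist x y / ((n * 2 ^ (m+1) : ℕ) : ℝ)) :=
          mul_le_mul_of_nonneg_right habs (by positivity)
      _ = dist x y / ((n * 2 ^ (m+1) : ℕ) : ℝ) := one_mul _
      _ ≤ dist x y / n * (1/2)^m := hδval
  haveI := hcomp
  have hlim : ∀ t : ℝ, ∃ p, Filter.Tendsto (fun m => G m (kf m t)) Filter.atTop (nhds p) :=
    fun t => cauchySeq_tendsto_of_complete (hCau t)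
  choose c hc using hlim
  -- endpoints
  have hkf0 : ∀ m, kf m 0 = 0 := by intro m; simp [hkf]
  have hkf1 : ∀ m, kf m 1 = n * 2 ^ m := by
    intro m
    simp only [hkf, min_self, max_eq_right zero_le_one, one_mul, Nat.floor_natCast]
  have hc0 : c 0 = x := by
    have heq : (fun m => G m (kf m 0)) = fun _ => x :=
      funext fun m => by rw [hkf0 m, (hGQ m).1]
    have := hc 0
    rw [heq] at this
    exact tendsto_nhds_unique this tendsto_const_nhds
  have hc1 : c 1 = y := by
    have heq : (fun m => G m (kf m 1)) = fun _ => y :=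
      funext fun m => by rw [hkf1 m, (hGQ m).2.1]
    have := hc 1
    rw [heq] at this
    exact tendsto_nhds_unique this tendsto_const_nhds
  -- convergence of snapped parameters
  have hconv : ∀ u : ℝ, u ∈ Icc (0:ℝ) 1 →
      Filter.Tendsto (fun m => (kf m u : ℝ) / ((n * 2 ^ m : ℕ) : ℝ)) Filter.atTop (nhds u) := by
    intro u hu
    have htcu : max 0 (min u 1) = u := by
      rw [min_eq_left hu.2, max_eq_right hu.1]
    have hb : ∀ m, dist ((kf m u : ℝ) / ((n * 2 ^ m : ℕ) : ℝ)) u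
        ≤ 1 / ((n * 2 ^ m : ℕ) : ℝ) := by
      intro m
      have hkfu : kf m u = ⌊u * ((n * 2 ^ m : ℕ) : ℝ)⌋₊ := by
        rw [hkf]
        simp only [htcu]
      have hu0 : 0 ≤ u * ((n * 2 ^ m : ℕ) : ℝ) := mul_nonneg hu.1 (hNR m).le
      have h1 : (kf m u : ℝ) ≤ u * ((n * 2 ^ m : ℕ) : ℝ) := by
        rw [hkfu]; exact Nat.floor_le hu0
      have h2 : u * ((n * 2 ^ m : ℕ) : ℝ) < kf m u + 1 := by
        rw [hkfu]; exact Nat.lt_floor_add_one _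
      have heq2 : (kf m u : ℝ) / ((n * 2 ^ m : ℕ) : ℝ) - u
          = ((kf m u : ℝ) - u * ((n * 2 ^ m : ℕ) : ℝ)) / ((n * 2 ^ m : ℕ) : ℝ) := by
        field_simp
      rw [Real.dist_eq, heq2, abs_div, abs_of_pos (hNR m)]
      have habs : |(kf m u : ℝ) - u * ((n * 2 ^ m : ℕ) : ℝ)| ≤ 1 := by
        rw [abs_le]; constructor <;> linarith
      gcongr
    have hto : Filter.Tendsto (fun m : ℕ => 1 / ((n * 2 ^ m : ℕ) : ℝ))
        Filter.atTop (nhds 0) := by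
      have heq3 : (fun m : ℕ => 1 / ((n * 2 ^ m : ℕ) : ℝ))
          = fun m => (1/(n:ℝ)) * (1/2)^m := by
        funext m
        push_cast
        rw [div_pow, one_pow, div_mul_div_comm, one_mul]
      rw [heq3]
      simpa using (tendsto_pow_atTop_nhds_zero_of_lt_one (by norm_num) (by norm_num)
        : Filter.Tendsto (fun m => ((1:ℝ)/2)^m) Filter.atTop (nhds 0)).const_mul (1/(n:ℝ))
    exact tendsto_iff_dist_tendsto_zero.2 (squeeze_zero (fun m => dist_nonneg) hb hto)
  have hmain : ∀ s ∈ Icc (0:ℝ) 1, ∀ t ∈ Icc (0:ℝ) 1,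
      dist (c s) (c t) = |s - t| * dist x y := by
    intro s hs t ht
    have h1 : Filter.Tendsto (fun m => dist (G m (kf m s)) (G m (kf m t)))
        Filter.atTop (nhds (dist (c s) (c t))) := (hc s).dist (hc t)
    have h2 : Filter.Tendsto (fun m => dist (G m (kf m s)) (G m (kf m t)))
        Filter.atTop (nhds (|s - t| * dist x y)) := by
      have heq4 : ∀ m, dist (G m (kf m s)) (G m (kf m t))
          = |(kf m s : ℝ) / ((n * 2 ^ m : ℕ) : ℝ) - (kf m t : ℝ) / ((n * 2 ^ m : ℕ) : ℝ)|
            * dist x y := by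
        intro m
        rw [hpair' m _ _ (hkfle m s) (hkfle m t),
          show (kf m s : ℝ) / ((n * 2 ^ m : ℕ) : ℝ) - (kf m t : ℝ) / ((n * 2 ^ m : ℕ) : ℝ)
            = ((kf m s : ℝ) - kf m t) / ((n * 2 ^ m : ℕ) : ℝ) by ring,
          abs_div, abs_of_pos (hNR m)]
        field_simp
      simp_rw [heq4]
      exact (((hconv s hs).sub (hconv t ht)).abs).mul_const (dist x y)
    exact tendsto_nhds_unique h1 h2
  refine ⟨c, hc0, hc1, fun s hs t ht => ?_⟩
  rw [hmain s hs t ht, hc0, hc1]
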